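/- Let T be any tree of order n ≥ 2 other than the star S_n. Then irr(T) < (n−1)(n−2) = irr(S_n); that is, the star uniquely maximizes the Albertson index among trees on n vertices. -/

import Mathlib

open SimpleGraph Finset

noncomputable instance decAdjInst {V : Type*} (G : SimpleGraph V) : DecidableRel G.Adj :=
  Classical.decRel _

/-- Albertson irregularity index: `∑_{uv ∈ E(G)} |deg u - deg v|`. -/
noncomputable def irr {V : Type*} [Fintype V] (G : SimpleGraph V) : ℕ := by
  classical
  exact ∑ e ∈ G.edgeFinset,
    Sym2.lift ⟨fun u v => ((G.degree u : ℤ) - (G.degree v : ℤ)).natAbs,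
      fun u v => by dsimp only; rw [← Int.natAbs_neg, neg_sub]⟩ e

/-- Sigma index: `∑_{uv ∈ E(G)} (deg u - deg v)^2`. -/
noncomputable def sigmaIdx {V : Type*} [Fintype V] (G : SimpleGraph V) : ℕ := by
  classical
  exact ∑ e ∈ G.edgeFinset,
    Sym2.lift ⟨fun u v => ((G.degree u : ℤ) - (G.degree v : ℤ)).natAbs ^ 2,
      fun u v => by dsimp only; rw [← Int.natAbs_neg, neg_sub]⟩ e
/-- Among trees of order `n ≥ 2`, any tree other than the star `S_n` satisfies
`irr(T) < (n−1)(n−2)`: the star uniquely maximizes the Albertson index. -/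
theorem star_unique_max_irr {V : Type*} [Fintype V] (T : SimpleGraph V) (hT : T.IsTree)
    (n : ℕ) (hn : Fintype.card V = n) (h2 : 2 ≤ n)
    (hnotstar : ¬ Nonempty (T ≃g completeBipartiteGraph (Fin 1) (Fin (n - 1)))) :
    irr T < (n - 1) * (n - 2) := by
  classical
  subst hn
  set n := Fintype.card V with hn
  unfold irr
  set F : Sym2 V → ℕ := Sym2.lift ⟨fun u v => ((T.degree u : ℤ) - (T.degree v : ℤ)).natAbs,
      fun u v => by dsimp only; rw [← Int.natAbs_neg, neg_sub]⟩ with hF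
  have hcard : T.edgeFinset.card + 1 = n := hT.card_edgeFinset
  have hdub : ∀ v : V, T.degree v ≤ n - 1 := by
    intro v
    have := T.degree_lt_card_verts v
    omega
  have hdlb : ∀ u v : V, T.Adj u v → 1 ≤ T.degree u := by
    intro u v h
    have hm : v ∈ T.neighborFinset u := (T.mem_neighborFinset u v).2 h
    exact Finset.card_pos.2 ⟨v, hm⟩
  have hbound : ∀ e ∈ T.edgeFinset, F e ≤ n - 2 := by
    intro e he
    induction e using Sym2.ind with
    | _ u v =>
      have hadj : T.Adj u v := by rwa [SimpleGraph.mem_edgeFinset, SimpleGraph.mem_edgeSet] at he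
      have h1 := hdlb u v hadj
      have h2' := hdlb v u hadj.symm
      have h3 := hdub u
      have h4 := hdub v
      simp only [hF, Sym2.lift_mk]
      omega
  by_cases hex : ∃ e ∈ T.edgeFinset, F e < n - 2
  · calc ∑ e ∈ T.edgeFinset, F e < ∑ _e ∈ T.edgeFinset, (n - 2) :=
          Finset.sum_lt_sum hbound hex
      _ = (n - 1) * (n - 2) := by
          rw [Finset.sum_const, smul_eq_mul]
          congr 1
          omega
  · exfalso
    push_neg at hex
    -- every edge is tight, so some vertex has degree n - 1
    have hne : T.edgeFinset.Nonempty := by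
      rw [← Finset.card_pos]
      omega
    have hw : ∃ w : V, T.degree w = n - 1 := by
      obtain ⟨e, he⟩ := hne
      induction e using Sym2.ind with
      | _ u v =>
        have hadj : T.Adj u v := by rwa [SimpleGraph.mem_edgeFinset, SimpleGraph.mem_edgeSet] at he
        have h0 := hex _ he
        have h1 := hdlb u v hadj
        have h2' := hdlb v u hadj.symm
        have h3 := hdub u
        have h4 := hdub v
        simp only [hF, Sym2.lift_mk] at h0
        rcases (by omega : T.degree u = n - 1 ∨ T.degree v = n - 1) with h | h
        · exact ⟨u, h⟩
        · exact ⟨v, h⟩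
    obtain ⟨w, hwdeg⟩ := hw
    have hwadj : ∀ x : V, x ≠ w → T.Adj w x := by
      have hsub : T.neighborFinset w ⊆ Finset.univ.erase w := by
        intro x hx
        rw [SimpleGraph.mem_neighborFinset] at hx
        exact Finset.mem_erase.2 ⟨hx.ne', Finset.mem_univ x⟩
      have hcle : (Finset.univ.erase w).card ≤ (T.neighborFinset w).card := by
        rw [Finset.card_erase_of_mem (Finset.mem_univ w), Finset.card_univ]
        exact le_of_eq hwdeg.symm
      have heq := Finset.eq_of_subset_of_card_le hsub hcle
      intro x hx
      have : x ∈ T.neighborFinset w := by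
        rw [heq]
        exact Finset.mem_erase.2 ⟨hx, Finset.mem_univ x⟩
      rwa [SimpleGraph.mem_neighborFinset] at this
    have hnoother : ∀ x y : V, T.Adj x y → x = w ∨ y = w := by
      intro x y hxy
      by_contra hc
      push_neg at hc
      obtain ⟨hx, hy⟩ := hc
      set S : Finset (Sym2 V) :=
        insert s(x, y) ((Finset.univ.erase w).image fun z => s(w, z)) with hS
      have hSsub : S ⊆ T.edgeFinset := by
        intro e heS
        rw [hS, Finset.mem_insert] at heS
        rcases heS with rfl | heS
        · rwa [SimpleGraph.mem_edgeFinset, SimpleGraph.mem_edgeSet]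
        · obtain ⟨z, hz, rfl⟩ := Finset.mem_image.1 heS
          rw [SimpleGraph.mem_edgeFinset, SimpleGraph.mem_edgeSet]
          exact hwadj z (Finset.mem_erase.1 hz).1
      have hnotmem : s(x, y) ∉ (Finset.univ.erase w).image fun z => s(w, z) := by
        intro hmem
        obtain ⟨z, _, hz⟩ := Finset.mem_image.1 hmem
        rw [Sym2.eq_iff] at hz
        rcases hz with ⟨h1, _⟩ | ⟨h1, _⟩
        · exact hx h1.symm
        · exact hy h1.symm
      have hinj : Set.InjOn (fun z => s(w, z)) (Finset.univ.erase w) := by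
        intro a ha b hb hab
        simp only at hab
        rw [Sym2.eq_iff] at hab
        rcases hab with ⟨_, h⟩ | ⟨h1, _⟩
        · exact h
        · exact absurd h1.symm (Finset.mem_erase.1 hb).1
      have hScard : S.card = n := by
        rw [hS, Finset.card_insert_of_notMem hnotmem, Finset.card_image_of_injOn hinj,
          Finset.card_erase_of_mem (Finset.mem_univ w), Finset.card_univ]
        omega
      have := Finset.card_le_card hSsub
      omega
    -- build the isomorphism with the star
    apply hnotstar
    have hcL : Fintype.card {x : V // x = w} = Fintype.card (Fin 1) := by
      simp [Fintype.card_subtype_eq]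
    have hcR : Fintype.card {x : V // ¬x = w} = Fintype.card (Fin (n - 1)) := by
      rw [Fintype.card_subtype_compl, Fintype.card_subtype_eq, Fintype.card_fin]
    let eL : {x : V // x = w} ≃ Fin 1 := Fintype.equivOfCardEq hcL
    let eR : {x : V // ¬x = w} ≃ Fin (n - 1) := Fintype.equivOfCardEq hcR
    let f : V ≃ (Fin 1 ⊕ Fin (n - 1)) :=
      (Equiv.sumCompl (· = w)).symm.trans (Equiv.sumCongr eL eR)
    refine ⟨⟨f, ?_⟩⟩
    intro a b
    have hfl : ∀ (x : V) (hx : x = w), f x = Sum.inl (eL ⟨x, hx⟩) := by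
      intro x hx
      simp only [f, Equiv.trans_apply, Equiv.sumCongr_apply]
      rw [Equiv.sumCompl_symm_apply_of_pos (p := fun x => x = w) hx, Sum.map_inl]
    have hfr : ∀ (x : V) (hx : ¬x = w), f x = Sum.inr (eR ⟨x, hx⟩) := by
      intro x hx
      simp only [f, Equiv.trans_apply, Equiv.sumCongr_apply]
      rw [Equiv.sumCompl_symm_apply_of_neg (p := fun x => x = w) hx, Sum.map_inr]
    show (completeBipartiteGraph (Fin 1) (Fin (n - 1))).Adj (f a) (f b) ↔ T.Adj a b
    by_cases ha : a = w <;> by_cases hb : b = w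
    · rw [hfl a ha, hfl b hb]
      subst ha
      subst hb
      simp [completeBipartiteGraph]
    · rw [hfl a ha, hfr b hb]
      subst ha
      simpa [completeBipartiteGraph] using hwadj b hb
    · rw [hfr a ha, hfl b hb]
      subst hb
      simpa [completeBipartiteGraph] using (hwadj a ha).symm
    · rw [hfr a ha, hfr b hb]
      simp only [completeBipartiteGraph, Sum.isLeft_inr, Sum.isRight_inr, Sum.isRight_inl,
        Bool.false_eq_true, false_and, and_false, or_self, false_iff]
      intro hadj
      rcases hnoother a b hadj with h | h
      · exact ha h
      · exact hb h
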